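/- For every n, the Tamari interval-posets of size n form a sublattice of the lattice of integer posets: if P and Q are Tamari interval-posets of size n, then the greatest lower bound and the least upper bound of {P, Q} taken in the weak order ⊑ among all partial orders on {1,…,n} are themselves Tamari interval-posets. -/

import Mathlib

/-- A Tamari interval-poset of size `n`. -/
def IsTamariIntervalPoset (n : ℕ) (r : Fin n → Fin n → Prop) : Prop :=
  IsPartialOrder (Fin n) r ∧
    (∀ a b c : Fin n, a < b → b < c → r a c → r b c) ∧
    (∀ a b c : Fin n, a < b → b < c → r c a → r b a)

/-- The increasing part of an integer relation `R` on `{1,…,n}`. -/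
def IncSet (n : ℕ) (R : Fin n → Fin n → Prop) : Set (Fin n × Fin n) :=
  {p | p.1 < p.2 ∧ R p.1 p.2}

/-- The decreasing part of an integer relation `R` on `{1,…,n}`. -/
def DecSet (n : ℕ) (R : Fin n → Fin n → Prop) : Set (Fin n × Fin n) :=
  {p | p.1 < p.2 ∧ R p.2 p.1}

/-- The weak order on integer relations. -/
def WeakLE (n : ℕ) (R S : Fin n → Fin n → Prop) : Prop :=
  DecSet n R ⊆ DecSet n S ∧ IncSet n S ⊆ IncSet n R

namespace TamariAux

variable {n : ℕ}

/-- One increasing step: an increasing relation of `P` or of `Q`. -/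
def inc0 (P Q : Fin n → Fin n → Prop) (x y : Fin n) : Prop :=
  x < y ∧ (P x y ∨ Q x y)

/-- Transitive closure of the union of increasing parts. -/
def incR (P Q : Fin n → Fin n → Prop) : Fin n → Fin n → Prop :=
  Relation.TransGen (inc0 P Q)

/-- The candidate meet of two Tamari interval-posets. -/
def Meet (P Q : Fin n → Fin n → Prop) (x y : Fin n) : Prop :=
  x = y ∨ incR P Q x y ∨ (y < x ∧ P x y ∧ Q x y)

theorem incR_lt {P Q : Fin n → Fin n → Prop} {x y : Fin n} (h : incR P Q x y) : x < y := by
  induction h with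
  | single h => exact h.1
  | tail _ h' ih => exact ih.trans h'.1

theorem transGen_head_cases {α : Type*} {r : α → α → Prop} {a b : α}
    (h : Relation.TransGen r a b) : r a b ∨ ∃ c, r a c ∧ Relation.TransGen r c b := by
  induction h with
  | single h => exact .inl h
  | tail hh h' ih =>
    rcases ih with h'' | ⟨c, h1, h2⟩
    · exact .inr ⟨_, h'', .single h'⟩
    · exact .inr ⟨c, h1, h2.tail h'⟩

section
variable {P Q : Fin n → Fin n → Prop}
  (hP : IsTamariIntervalPoset n P) (hQ : IsTamariIntervalPoset n Q)

include hP hQ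

theorem incR_cond1 {a b c : Fin n} (hab : a < b) (h : incR P Q a c) :
    b < c → incR P Q b c := by
  induction h with
  | single h' =>
    intro hbc
    exact .single ⟨hbc, h'.2.elim (fun hp => .inl (hP.2.1 a b _ hab hbc hp))
      (fun hq => .inr (hQ.2.1 a b _ hab hbc hq))⟩
  | @tail m c' hh h' ih =>
    intro hbc
    rcases lt_trichotomy b m with hbm | rfl | hmb
    · exact (ih hbm).tail h'
    · exact .single h'
    · exact .single ⟨hbc, h'.2.elim (fun hp => .inl (hP.2.1 m b c' hmb hbc hp))
        (fun hq => .inr (hQ.2.1 m b c' hmb hbc hq))⟩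

/-- a single increasing step from `y` cannot stay below `x` when `x` dominates `y`
decreasingly in both posets. -/
theorem step_contra {x y m : Fin n} (hym : y < m) (hmx : m < x)
    (hp : P x y) (hq : Q x y) (h : inc0 P Q y m) : False := by
  rcases h.2 with h' | h'
  · exact absurd (hP.1.antisymm _ _ h' (hP.2.2 y m x hym hmx hp)) hym.ne
  · exact absurd (hQ.1.antisymm _ _ h' (hQ.2.2 y m x hym hmx hq)) hym.ne

theorem not_incR_dec {x y : Fin n} (hxy : x < y) (h : incR P Q x y)
    (hp : P y x) (hq : Q y x) : False := by
  rcases transGen_head_cases h with h' | ⟨m, h1, h2⟩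
  · rcases h'.2 with h'' | h''
    · exact absurd (hP.1.antisymm _ _ h'' hp) hxy.ne
    · exact absurd (hQ.1.antisymm _ _ h'' hq) hxy.ne
  · exact step_contra hP hQ h1.1 (incR_lt h2) hp hq h1

/-- An increasing chain from `x` to `y` can be cut at `z` when `y` dominates `z`
decreasingly in both posets. -/
theorem lemA {x y z : Fin n} (hzy : z < y) (hp : P y z) (hq : Q y z)
    (h : incR P Q x y) : x < z → incR P Q x z := by
  induction h using Relation.TransGen.head_induction_on with
  | single h' =>
    intro hxz
    exact .single ⟨hxz, h'.2.elim (fun h'' => .inl (hP.1.trans _ _ _ h'' hp))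
      (fun h'' => .inr (hQ.1.trans _ _ _ h'' hq))⟩
  | @head a m h' h ih =>
    intro hxz
    rcases lt_trichotomy m z with hmz | rfl | hzm
    · exact .head h' (ih hmz)
    · exact .single h'
    · have hmy : m < y := incR_lt h
      have hp' : P m z := hP.2.2 z m y hzm hmy hp
      have hq' : Q m z := hQ.2.2 z m y hzm hmy hq
      exact .single ⟨hxz, h'.2.elim (fun h'' => .inl (hP.1.trans _ _ _ h'' hp'))
        (fun h'' => .inr (hQ.1.trans _ _ _ h'' hq'))⟩

/-- No increasing chain can start at `y` and end below `x` when `x` dominates `y`. -/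
theorem lemB {x y z : Fin n} (_hyx : y < x) (hzx : z < x)
    (hp : P x y) (hq : Q x y) (h : incR P Q y z) : False := by
  rcases transGen_head_cases h with h' | ⟨m, h1, h2⟩
  · exact step_contra hP hQ h'.1 hzx hp hq h'
  · exact step_contra hP hQ h1.1 ((incR_lt h2).trans hzx) hp hq h1

theorem meet_po : IsPartialOrder (Fin n) (Meet P Q) := by
  refine { refl := fun a => Or.inl rfl, trans := ?_, antisymm := ?_ }
  · rintro x y z (rfl | hxy | hxy) hyz
    · exact hyz
    · rcases hyz with rfl | hyz | ⟨hzy, hpz, hqz⟩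
      · exact .inr (.inl hxy)
      · exact .inr (.inl (hxy.trans hyz))
      · -- inc x y, dec y z
        rcases lt_trichotomy x z with hxz | rfl | hzx
        · exact .inr (.inl (lemA hP hQ hzy hpz hqz hxy hxz))
        · exact .inl rfl
        · have hxy' : x < y := incR_lt hxy
          exact .inr (.inr ⟨hzx, hP.2.2 z x y hzx hxy' hpz, hQ.2.2 z x y hzx hxy' hqz⟩)
    · rcases hyz with rfl | hyz | ⟨hzy, hpz, hqz⟩
      · exact .inr (.inr hxy)
      · -- dec x y, inc y z
        obtain ⟨hyx, hpx, hqx⟩ := hxy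
        rcases lt_trichotomy x z with hxz | rfl | hzx
        · exact .inr (.inl (incR_cond1 hP hQ hyx hyz hxz))
        · exact .inl rfl
        · exact absurd (lemB hP hQ hyx hzx hpx hqx hyz) not_false
      · exact .inr (.inr ⟨hzy.trans hxy.1, hP.1.trans _ _ _ hxy.2.1 hpz,
          hQ.1.trans _ _ _ hxy.2.2 hqz⟩)
  · rintro x y (rfl | hxy | hxy) hyx
    · rfl
    · rcases hyx with rfl | hyx | ⟨hxy', hp, hq⟩
      · rfl
      · exact absurd ((incR_lt hxy).trans (incR_lt hyx)) (lt_irrefl x)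
      · exact absurd (not_incR_dec hP hQ hxy' hxy hp hq) not_false
    · rcases hyx with rfl | hyx | ⟨hyx', hp, hq⟩
      · rfl
      · exact absurd (not_incR_dec hP hQ hxy.1 hyx hxy.2.1 hxy.2.2) not_false
      · exact absurd (hxy.1.trans hyx') (lt_irrefl y)

theorem meet_tamari : IsTamariIntervalPoset n (Meet P Q) := by
  refine ⟨meet_po hP hQ, ?_, ?_⟩
  · rintro a b c hab hbc (rfl | h | ⟨h, _⟩)
    · exact absurd (hab.trans hbc) (lt_irrefl a)
    · exact .inr (.inl (incR_cond1 hP hQ hab h hbc))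
    · exact absurd (h.trans (hab.trans hbc)) (lt_irrefl _)
  · rintro a b c hab hbc (rfl | h | ⟨h, hp, hq⟩)
    · exact absurd (hab.trans hbc) (lt_irrefl _)
    · exact absurd ((hab.trans hbc).trans (incR_lt h)) (lt_irrefl a)
    · exact .inr (.inr ⟨hab, hP.2.2 a b c hab hbc hp, hQ.2.2 a b c hab hbc hq⟩)

theorem meet_le_left : WeakLE n (Meet P Q) P := by
  constructor
  · rintro ⟨a, b⟩ ⟨hab, (heq | h | ⟨_, hp, _⟩)⟩
    · exact absurd (hab.trans_eq heq) (lt_irrefl _)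
    · exact absurd (hab.trans (incR_lt h)) (lt_irrefl a)
    · exact ⟨hab, hp⟩
  · rintro ⟨a, b⟩ ⟨hab, h⟩
    exact ⟨hab, .inr (.inl (.single ⟨hab, .inl h⟩))⟩

theorem meet_le_right : WeakLE n (Meet P Q) Q := by
  constructor
  · rintro ⟨a, b⟩ ⟨hab, (heq | h | ⟨_, _, hq⟩)⟩
    · exact absurd (hab.trans_eq heq) (lt_irrefl _)
    · exact absurd (hab.trans (incR_lt h)) (lt_irrefl a)
    · exact ⟨hab, hq⟩
  · rintro ⟨a, b⟩ ⟨hab, h⟩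
    exact ⟨hab, .inr (.inl (.single ⟨hab, .inr h⟩))⟩

theorem meet_greatest (T : Fin n → Fin n → Prop) (hT : IsPartialOrder (Fin n) T)
    (h1 : WeakLE n T P) (h2 : WeakLE n T Q) : WeakLE n T (Meet P Q) := by
  constructor
  · rintro ⟨a, b⟩ ⟨hab, h⟩
    obtain ⟨_, hp⟩ := h1.1 ⟨hab, h⟩
    obtain ⟨_, hq⟩ := h2.1 ⟨hab, h⟩
    exact ⟨hab, .inr (.inr ⟨hab, hp, hq⟩)⟩
  · rintro ⟨a, b⟩ ⟨hab, (heq | h | ⟨h, _⟩)⟩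
    · exact absurd heq hab.ne
    · refine ⟨hab, ?_⟩
      show T a b
      have hiP : ∀ u v : Fin n, u < v → P u v → T u v := fun u v hu hv =>
        (h1.2 (show (u, v) ∈ IncSet n P from ⟨hu, hv⟩)).2
      have hiQ : ∀ u v : Fin n, u < v → Q u v → T u v := fun u v hu hv =>
        (h2.2 (show (u, v) ∈ IncSet n Q from ⟨hu, hv⟩)).2
      have h' : incR P Q a b := h
      clear hab h
      induction h' with
      | single h' =>
        exact h'.2.elim (fun hp => hiP _ _ h'.1 hp) (fun hq => hiQ _ _ h'.1 hq)
      | tail hh h' ih =>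
        exact hT.trans _ _ _ ih
          (h'.2.elim (fun hp => hiP _ _ h'.1 hp) (fun hq => hiQ _ _ h'.1 hq))
    · exact absurd (h.trans hab) (lt_irrefl _)

end

/-- Pointwise equivalence from mutual weak-order comparability. -/
theorem iff_of_weakLE {M N : Fin n → Fin n → Prop} (hM : ∀ a, M a a) (hN : ∀ a, N a a)
    (h1 : WeakLE n M N) (h2 : WeakLE n N M) (x y : Fin n) : M x y ↔ N x y := by
  rcases lt_trichotomy x y with h | rfl | h
  · exact ⟨fun hm => (h2.2 (show (x, y) ∈ IncSet n M from ⟨h, hm⟩)).2,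
      fun hn => (h1.2 (show (x, y) ∈ IncSet n N from ⟨h, hn⟩)).2⟩
  · exact ⟨fun _ => hN x, fun _ => hM x⟩
  · exact ⟨fun hm => (h1.1 (show (y, x) ∈ DecSet n M from ⟨h, hm⟩)).2,
      fun hn => (h2.1 (show (y, x) ∈ DecSet n N from ⟨h, hn⟩)).2⟩

theorem tamari_of_iff {M N : Fin n → Fin n → Prop} (hM : IsPartialOrder (Fin n) M)
    (hN : IsTamariIntervalPoset n N) (e : ∀ x y, M x y ↔ N x y) :
    IsTamariIntervalPoset n M := by
  refine ⟨hM, ?_, ?_⟩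
  · intro a b c hab hbc h
    exact (e b c).mpr (hN.2.1 a b c hab hbc ((e a c).mp h))
  · intro a b c hab hbc h
    exact (e b a).mpr (hN.2.2 a b c hab hbc ((e c a).mp h))

/-- The main lemma: any greatest lower bound of two Tamari interval-posets among
partial orders is a Tamari interval-poset. -/
theorem glb_tamari {P Q M : Fin n → Fin n → Prop}
    (hP : IsTamariIntervalPoset n P) (hQ : IsTamariIntervalPoset n Q)
    (hMpo : IsPartialOrder (Fin n) M) (h1 : WeakLE n M P) (h2 : WeakLE n M Q)
    (hmax : ∀ T : Fin n → Fin n → Prop, IsPartialOrder (Fin n) T →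
      WeakLE n T P → WeakLE n T Q → WeakLE n T M) :
    IsTamariIntervalPoset n M := by
  have hup : WeakLE n M (Meet P Q) := meet_greatest hP hQ M hMpo h1 h2
  have hdown : WeakLE n (Meet P Q) M :=
    hmax (Meet P Q) (meet_po hP hQ) (meet_le_left hP hQ) (meet_le_right hP hQ)
  exact tamari_of_iff hMpo (meet_tamari hP hQ)
    (iff_of_weakLE (fun a => hMpo.refl a) (fun a => (meet_po hP hQ).refl a) hup hdown)

/-- Reversal of a relation along the order-reversing involution of `Fin n`. -/
def Rev (r : Fin n → Fin n → Prop) (x y : Fin n) : Prop := r x.rev y.rev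

theorem rev_rev_eq (r : Fin n → Fin n → Prop) : Rev (Rev r) = r := by
  funext x y
  simp [Rev, Fin.rev_rev]

theorem po_rev {r : Fin n → Fin n → Prop} (h : IsPartialOrder (Fin n) r) :
    IsPartialOrder (Fin n) (Rev r) := by
  refine { refl := ?_, trans := ?_, antisymm := ?_ }
  · intro a
    exact h.refl _
  · intro a b c h1 h2
    exact h.trans _ _ _ h1 h2
  · intro a b h1 h2
    exact Fin.rev_injective (h.antisymm _ _ h1 h2)

theorem tamari_rev {r : Fin n → Fin n → Prop} (h : IsTamariIntervalPoset n r) :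
    IsTamariIntervalPoset n (Rev r) := by
  refine ⟨po_rev h.1, ?_, ?_⟩
  · intro a b c hab hbc h'
    exact h.2.2 c.rev b.rev a.rev (Fin.rev_lt_rev.mpr hbc) (Fin.rev_lt_rev.mpr hab) h'
  · intro a b c hab hbc h'
    exact h.2.1 c.rev b.rev a.rev (Fin.rev_lt_rev.mpr hbc) (Fin.rev_lt_rev.mpr hab) h'

theorem weakLE_rev {R S : Fin n → Fin n → Prop} (h : WeakLE n R S) :
    WeakLE n (Rev S) (Rev R) := by
  constructor
  · rintro ⟨a, b⟩ ⟨hab, hba⟩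
    -- hba : Rev S b a = S b.rev a.rev, with b.rev < a.rev
    have : (b.rev, a.rev) ∈ IncSet n S := ⟨Fin.rev_lt_rev.mpr hab, hba⟩
    exact ⟨hab, (h.2 this).2⟩
  · rintro ⟨a, b⟩ ⟨hab, hba⟩
    -- hba : Rev R a b = R a.rev b.rev with b.rev < a.rev : decreasing in R
    have : (b.rev, a.rev) ∈ DecSet n R := ⟨Fin.rev_lt_rev.mpr hab, hba⟩
    exact ⟨hab, (h.1 this).2⟩

end TamariAux

open TamariAux

theorem tamari_interval_posets_sublattice (n : ℕ)
    (P Q : Fin n → Fin n → Prop)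
    (hP : IsTamariIntervalPoset n P) (hQ : IsTamariIntervalPoset n Q) :
    (∀ M : Fin n → Fin n → Prop, IsPartialOrder (Fin n) M →
      WeakLE n M P → WeakLE n M Q →
      (∀ T : Fin n → Fin n → Prop, IsPartialOrder (Fin n) T →
        WeakLE n T P → WeakLE n T Q → WeakLE n T M) →
      IsTamariIntervalPoset n M) ∧
    (∀ J : Fin n → Fin n → Prop, IsPartialOrder (Fin n) J →
      WeakLE n P J → WeakLE n Q J →
      (∀ T : Fin n → Fin n → Prop, IsPartialOrder (Fin n) T →
        WeakLE n P T → WeakLE n Q T → WeakLE n J T) →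
      IsTamariIntervalPoset n J) := by
  constructor
  · intro M hMpo h1 h2 hmax
    exact glb_tamari hP hQ hMpo h1 h2 hmax
  · intro J hJpo h1 h2 hmin
    have key : IsTamariIntervalPoset n (Rev J) := by
      refine glb_tamari (tamari_rev hP) (tamari_rev hQ) (po_rev hJpo)
        (weakLE_rev h1) (weakLE_rev h2) ?_
      intro T hTpo hTP hTQ
      have hTP' : WeakLE n P (Rev T) := by
        have := weakLE_rev hTP
        rwa [rev_rev_eq] at this
      have hTQ' : WeakLE n Q (Rev T) := by
        have := weakLE_rev hTQ
        rwa [rev_rev_eq] at this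
      have := weakLE_rev (hmin (Rev T) (po_rev hTpo) hTP' hTQ')
      rwa [rev_rev_eq] at this
    have := tamari_rev key
    rwa [rev_rev_eq] at this
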